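/- Let Γ be a finite nonempty subset of ℤ, let l ≥ 1, and let (a₁, …, a_l) be a sequence of natural numbers with sum r = a₁ + ⋯ + a_l. Then the number of partitions of Γ into exactly l pairwise disjoint nonempty blocks γ₁, …, γ_l, labelled so that min γ₁ < min γ₂ < ⋯ < min γ_l, which satisfy Δ(γ_i) = a_i for every i (where Δ(γ) := max γ − min γ), is at most e^{(1 + log 2)·r}. -/

import Mathlib

open Finset

private lemma diam_aux {l : ℕ} (a : Fin l → ℕ) (γ : Fin l → Finset ℤ)
    (h1 : ∀ i, (γ i).Nonempty)
    (h5 : ∀ i, ((γ i).max.unbotD 0) - ((γ i).min.untopD 0) = (a i : ℤ))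
    (i : Fin l) {x : ℤ} (hx : x ∈ γ i) :
    (γ i).min' (h1 i) ≤ x ∧ x ≤ (γ i).min' (h1 i) + a i := by
  refine ⟨Finset.min'_le _ _ hx, ?_⟩
  have h5i := h5 i
  rw [← (γ i).coe_max' (h1 i), ← Finset.coe_min' (h1 i)] at h5i
  simp only [WithBot.unbotD_coe, WithTop.untopD_coe] at h5i
  have := Finset.le_max' (γ i) x hx
  omega

private lemma recon_aux {l : ℕ} (a : Fin l → ℕ) (γ : Fin l → Finset ℤ)
    (h1 : ∀ i, (γ i).Nonempty)
    (h5 : ∀ i, ((γ i).max.unbotD 0) - ((γ i).min.untopD 0) = (a i : ℤ))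
    (i : Fin l) :
    γ i = insert ((γ i).min' (h1 i))
      ((((γ i).erase ((γ i).min' (h1 i))).image
          (fun x => (x - (γ i).min' (h1 i) - 1).toNat)).image
        (fun n : ℕ => (γ i).min' (h1 i) + n + 1)) := by
  ext x
  simp only [Finset.mem_insert, Finset.mem_image, Finset.mem_erase]
  constructor
  · intro hx
    by_cases hxm : x = (γ i).min' (h1 i)
    · exact Or.inl hxm
    · refine Or.inr ⟨(x - (γ i).min' (h1 i) - 1).toNat, ⟨x, ⟨hxm, hx⟩, rfl⟩, ?_⟩
      have := (diam_aux a γ h1 h5 i hx).1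
      omega
  · rintro (rfl | ⟨n, ⟨y, ⟨hyne, hy⟩, rfl⟩, rfl⟩)
    · exact (γ i).min'_mem _
    · have hd := (diam_aux a γ h1 h5 i hy).1
      have heq : (γ i).min' (h1 i) + ((y - (γ i).min' (h1 i) - 1).toNat : ℤ) + 1 = y := by
        omega
      rw [heq]; exact hy

private lemma min_le_aux {l : ℕ} (Γ : Finset ℤ) (δ δ' : Fin l → Finset ℤ)
    (h1 : ∀ i, (δ i).Nonempty)
    (h3 : Finset.univ.biUnion δ = Γ)
    (h4 : ∀ i j : Fin l, i < j → (δ i).min < (δ j).min)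
    (h1' : ∀ i, (δ' i).Nonempty)
    (h2' : ∀ i j, i ≠ j → Disjoint (δ' i) (δ' j))
    (h3' : Finset.univ.biUnion δ' = Γ)
    (i : Fin l) (hagree : ∀ j, j < i → δ j = δ' j) :
    (δ i).min' (h1 i) ≤ (δ' i).min' (h1' i) := by
  set m' := (δ' i).min' (h1' i) with hm'
  have hm'Γ : m' ∈ Finset.univ.biUnion δ := by
    rw [h3, ← h3']
    exact Finset.mem_biUnion.2 ⟨i, Finset.mem_univ _, Finset.min'_mem _ _⟩
  obtain ⟨j, -, hjm⟩ := Finset.mem_biUnion.1 hm'Γ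
  have hij : i ≤ j := by
    by_contra hcon
    push_neg at hcon
    have h' : m' ∈ δ' j := by rw [← hagree j hcon]; exact hjm
    exact absurd (Finset.min'_mem (δ' i) (h1' i))
      (Finset.disjoint_left.1 (h2' j i (ne_of_lt hcon)) h')
  have h1j : (δ i).min' (h1 i) ≤ (δ j).min' (h1 j) := by
    rcases eq_or_lt_of_le hij with h | hlt
    · cases h; exact le_refl _
    · have hh := h4 i j hlt
      rw [← Finset.coe_min' (h1 i), ← Finset.coe_min' (h1 j)] at hh
      exact le_of_lt (by exact_mod_cast hh)
  exact h1j.trans (Finset.min'_le _ _ hjm)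

/-- Counting bound on the number of partitions with prescribed block diameters:
the number of partitions of a finite set `Γ ⊆ ℤ` into `l` pairwise disjoint
nonempty blocks `γ₁, …, γ_l`, labelled so that `min γ₁ < ⋯ < min γ_l`, with
prescribed diameters `Δ(γ_i) = a_i`, is at most `e^{(1 + log 2)·r}` where
`r = a₁ + ⋯ + a_l`. -/
theorem statement19 (Γ : Finset ℤ) (hΓ : Γ.Nonempty) (l : ℕ) (hl : 1 ≤ l)
    (a : Fin l → ℕ) :
    (Nat.card {γ : Fin l → Finset ℤ //
        (∀ i, (γ i).Nonempty) ∧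
        (∀ i j, i ≠ j → Disjoint (γ i) (γ j)) ∧
        (Finset.univ.biUnion γ = Γ) ∧
        (∀ i j : Fin l, i < j → (γ i).min < (γ j).min) ∧
        (∀ i, ((γ i).max.unbotD 0) - ((γ i).min.untopD 0) = (a i : ℤ))} : ℝ)
      ≤ Real.exp ((1 + Real.log 2) * ∑ i, (a i : ℝ)) := by
  classical
  set S := {γ : Fin l → Finset ℤ //
        (∀ i, (γ i).Nonempty) ∧
        (∀ i j, i ≠ j → Disjoint (γ i) (γ j)) ∧
        (Finset.univ.biUnion γ = Γ) ∧
        (∀ i j : Fin l, i < j → (γ i).min < (γ j).min) ∧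
        (∀ i, ((γ i).max.unbotD 0) - ((γ i).min.untopD 0) = (a i : ℤ))} with hS
  have key : Nat.card S ≤ 2 ^ (∑ i, a i) := by
    set T : Finset (Fin l → Finset ℕ) :=
      Fintype.piFinset (fun i => (Finset.range (a i)).powerset) with hT
    set F : S → (Fin l → Finset ℕ) := fun γ i =>
      ((γ.1 i).erase ((γ.1 i).min' (γ.2.1 i))).image
        (fun x => (x - (γ.1 i).min' (γ.2.1 i) - 1).toNat) with hF
    have hFT : ∀ γ, F γ ∈ T := by
      intro γ
      simp only [hT, Fintype.mem_piFinset, Finset.mem_powerset]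
      intro i n hn
      simp only [hF, Finset.mem_image, Finset.mem_erase] at hn
      obtain ⟨x, ⟨hxne, hx⟩, rfl⟩ := hn
      obtain ⟨hle, hle'⟩ := diam_aux a γ.1 γ.2.1 γ.2.2.2.2.2 i hx
      simp only [Finset.mem_range]
      omega
    have hinj : Function.Injective F := by
      rintro γ γ' hFe
      have main : ∀ n : ℕ, ∀ i : Fin l, (i : ℕ) = n → γ.1 i = γ'.1 i := by
        intro n
        induction n using Nat.strong_induction_on with
        | _ n IH =>
          rintro i rfl
          have IH' : ∀ j : Fin l, j < i → γ.1 j = γ'.1 j := fun j hj => IH j hj j rfl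
          have hm : (γ.1 i).min' (γ.2.1 i) = (γ'.1 i).min' (γ'.2.1 i) :=
            le_antisymm
              (min_le_aux Γ γ.1 γ'.1 γ.2.1 γ.2.2.2.1 γ.2.2.2.2.1 γ'.2.1 γ'.2.2.1
                γ'.2.2.2.1 i IH')
              (min_le_aux Γ γ'.1 γ.1 γ'.2.1 γ'.2.2.2.1 γ'.2.2.2.2.1 γ.2.1 γ.2.2.1
                γ.2.2.2.1 i (fun j hj => (IH' j hj).symm))
          have hs : F γ i = F γ' i := congrFun hFe i
          calc γ.1 i
              = insert ((γ.1 i).min' (γ.2.1 i))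
                  ((F γ i).image (fun n : ℕ => (γ.1 i).min' (γ.2.1 i) + n + 1)) :=
                recon_aux a γ.1 γ.2.1 γ.2.2.2.2.2 i
            _ = insert ((γ'.1 i).min' (γ'.2.1 i))
                  ((F γ' i).image (fun n : ℕ => (γ'.1 i).min' (γ'.2.1 i) + n + 1)) := by
                rw [hm, hs]
            _ = γ'.1 i := (recon_aux a γ'.1 γ'.2.1 γ'.2.2.2.2.2 i).symm
      exact Subtype.ext (funext fun i => main i i rfl)
    have hcard : Nat.card S ≤ Nat.card {s // s ∈ T} := by
      refine Nat.card_le_card_of_injective (fun γ => (⟨F γ, hFT γ⟩ : {s // s ∈ T})) ?_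
      intro x y hxy
      exact hinj (congrArg Subtype.val hxy)
    refine hcard.trans ?_
    rw [Nat.card_eq_finsetCard T, hT, Fintype.card_piFinset]
    simp only [Finset.card_powerset, Finset.card_range]
    exact le_of_eq (Finset.prod_pow_eq_pow_sum _ _ _)
  have hr : ∑ i, ((a i : ℝ)) = ((∑ i, a i : ℕ) : ℝ) := by push_cast; ring
  have h1 : (Nat.card S : ℝ) ≤ ((2 : ℝ)) ^ (∑ i, a i) := by exact_mod_cast key
  refine h1.trans ?_
  have h2 : ((2 : ℝ)) ^ (∑ i, a i) = Real.exp (Real.log 2 * ((∑ i, a i : ℕ) : ℝ)) := by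
    rw [← Real.exp_log (show (0:ℝ) < 2 by norm_num), ← Real.exp_nat_mul,
      Real.log_exp, mul_comm]
  rw [h2, hr]
  apply Real.exp_le_exp.2
  have h3 : (0:ℝ) ≤ ((∑ i, a i : ℕ) : ℝ) := Nat.cast_nonneg _
  nlinarith
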